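/- arXiv:2509.07479 — 6 statements merged into one kernel-verified Lean document; each statement's English description precedes it below -/
import Mathlib

section
/- Let H₀ be an infinite-dimensional Hilbert space. There is no topology on H₀ whose convergent nets are exactly the nets (ζ_α) that converge 'meta weakly' to some ζ∞, where (ζ_α) converges meta weakly to ζ∞ means: for every net (η_α) converging to η∞ in norm, ⟨ζ_α, η_α⟩ → ⟨ζ∞, η∞⟩. -/
set_option maxHeartbeats 1000000


/-- Meta weak convergence of a net `(ζ_α)` to `z`: for every net `(η_α)` over the same index
set converging in norm to some `w`, one has `⟨ζ_α, η_α⟩ → ⟨z, w⟩`. -/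
def MetaWeakConv {H : Type*} [NormedAddCommGroup H] [InnerProductSpace ℂ H]
    {A : Type*} [Preorder A] (ζ : A → H) (z : H) : Prop :=
  ∀ (η : A → H) (w : H), Filter.Tendsto η Filter.atTop (nhds w) →
    Filter.Tendsto (fun α => (inner ℂ (ζ α) (η α) : ℂ)) Filter.atTop (nhds (inner ℂ z w))

open Filter

private lemma exists_orthonormal_seq {H : Type*} [NormedAddCommGroup H]
    [InnerProductSpace ℂ H] [CompleteSpace H] (hinf : ¬ FiniteDimensional ℂ H) :
    ∃ e : ℕ → H, Orthonormal ℂ e := by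
  obtain ⟨w, b, hb⟩ := exists_hilbertBasis ℂ H
  have hw : w.Infinite := by
    by_contra hfin
    rw [Set.not_infinite] at hfin
    apply hinf
    haveI : FiniteDimensional ℂ (Submodule.span ℂ w) := FiniteDimensional.span_of_finite ℂ hfin
    have hclosed : IsClosed (Submodule.span ℂ w : Set H) :=
      Submodule.closed_of_finiteDimensional _
    have hd := b.dense_span
    rw [hb, Subtype.range_coe] at hd
    have htop : Submodule.span ℂ w = ⊤ := by
      rw [← hd]
      exact hclosed.submodule_topologicalClosure_eq.symm
    haveI hfd : FiniteDimensional ℂ (⊤ : Submodule ℂ H) :=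
      htop ▸ ‹FiniteDimensional ℂ (Submodule.span ℂ w)›
    exact (Submodule.topEquiv (R := ℂ) (M := H)).finiteDimensional
  refine ⟨fun n => ((Set.Infinite.natEmbedding w hw n : w) : H), ?_⟩
  have hbo := b.orthonormal
  rw [hb] at hbo
  exact hbo.comp _ (Set.Infinite.natEmbedding w hw).injective

private lemma bessel_tendsto {H : Type*} [NormedAddCommGroup H] [InnerProductSpace ℂ H]
    {e : ℕ → H} (he : Orthonormal ℂ e) (η : ℕ → H) (v : H)
    (hη : Tendsto η atTop (nhds v)) (g : ℕ → ℕ) (hg : Tendsto g atTop atTop) :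
    Tendsto (fun m => (inner ℂ (e (g m)) (η m) : ℂ)) atTop (nhds 0) := by
  have h1 : Tendsto (fun n => (inner ℂ (e n) v : ℂ)) atTop (nhds 0) := by
    have hsum : Summable fun n => ‖(inner ℂ (e n) v : ℂ)‖ ^ 2 :=
      Orthonormal.inner_products_summable v he
    have h0 := hsum.tendsto_atTop_zero
    have h0' : Tendsto (fun n => ‖(inner ℂ (e n) v : ℂ)‖) atTop (nhds 0) := by
      have := (Real.continuous_sqrt.tendsto 0).comp h0
      simpa [Function.comp_def, Real.sqrt_sq, norm_nonneg] using this
    rw [tendsto_zero_iff_norm_tendsto_zero]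
    exact h0'
  have h1' := h1.comp hg
  have h2 : Tendsto (fun m => (inner ℂ (e (g m)) (η m - v) : ℂ)) atTop (nhds 0) := by
    apply squeeze_zero_norm (a := fun m => ‖η m - v‖)
    · intro m
      calc ‖(inner ℂ (e (g m)) (η m - v) : ℂ)‖ ≤ ‖e (g m)‖ * ‖η m - v‖ :=
            norm_inner_le_norm _ _
        _ = ‖η m - v‖ := by rw [he.1 (g m), one_mul]
    · exact tendsto_iff_norm_sub_tendsto_zero.mp hη
  have := h2.add h1'
  simpa [inner_sub_right, Function.comp_def] using this

private lemma mwA {H : Type*} [NormedAddCommGroup H] [InnerProductSpace ℂ H]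
    {e : ℕ → H} (he : Orthonormal ℂ e) (n : ℕ) :
    MetaWeakConv (fun m => e (n + 1) + ((n : ℂ) + 1) • e (n + m + 2)) (e (n + 1)) := by
  intro η v hη
  have hg : Tendsto (fun m : ℕ => n + m + 2) atTop atTop :=
    (tendsto_add_atTop_nat (n + 2)).congr fun m => by omega
  have h1 : Tendsto (fun m => (inner ℂ (e (n + 1)) (η m) : ℂ)) atTop
      (nhds (inner ℂ (e (n + 1)) v)) := Filter.Tendsto.inner tendsto_const_nhds hη
  have h2 := (bessel_tendsto he η v hη _ hg).const_mul ((starRingEnd ℂ) ((n : ℂ) + 1))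
  have hsum := h1.add h2
  rw [mul_zero, add_zero] at hsum
  refine hsum.congr fun m => ?_
  simp [inner_add_left, inner_smul_left, mul_comm]

private lemma mwB {H : Type*} [NormedAddCommGroup H] [InnerProductSpace ℂ H]
    {e : ℕ → H} (he : Orthonormal ℂ e) :
    MetaWeakConv (fun n : ℕ => e (n + 1)) 0 := by
  intro η v hη
  have hg : Tendsto (fun n : ℕ => n + 1) atTop atTop := tendsto_add_atTop_nat 1
  have := bessel_tendsto he η v hη _ hg
  simpa [inner_zero_left] using this

private lemma not_mw_diag {H : Type*} [NormedAddCommGroup H] [InnerProductSpace ℂ H]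
    {e : ℕ → H} (he : Orthonormal ℂ e) :
    ¬ MetaWeakConv
        (fun p : ℕ × (ℕ → ℕ) => e (p.1 + 1) + ((p.1 : ℂ) + 1) • e (p.1 + p.2 p.1 + 2)) 0 := by
  intro hmw
  have hite : ∀ i j : ℕ, (inner ℂ (e i) (e j) : ℂ) = if i = j then 1 else 0 :=
    orthonormal_iff_ite.mp he
  set η : ℕ × (ℕ → ℕ) → H := fun p => (((p.1 : ℂ) + 1))⁻¹ • e (p.1 + p.2 p.1 + 2) with hη
  have hfst : Tendsto (fun p : ℕ × (ℕ → ℕ) => p.1) atTop atTop := by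
    rw [← Filter.prod_atTop_atTop_eq]
    exact Filter.tendsto_fst
  have hη0 : Tendsto η atTop (nhds (0 : H)) := by
    rw [tendsto_zero_iff_norm_tendsto_zero]
    apply squeeze_zero (fun p => norm_nonneg _) (g := fun p : ℕ × (ℕ → ℕ) => ((p.1 : ℝ) + 1)⁻¹)
    · intro p
      rw [hη]
      simp only [norm_smul, he.1, mul_one, norm_inv]
      apply le_of_eq
      congr 1
      rw [show ((p.1 : ℂ) + 1) = ((p.1 + 1 : ℕ) : ℂ) by push_cast; ring]
      rw [Complex.norm_natCast]
      push_cast; ring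
    · apply tendsto_inv_atTop_zero.comp
      apply tendsto_atTop_add_const_right
      exact tendsto_natCast_atTop_atTop.comp hfst
  have hlim := hmw η 0 hη0
  have hconst : (fun p : ℕ × (ℕ → ℕ) =>
      (inner ℂ (e (p.1 + 1) + ((p.1 : ℂ) + 1) • e (p.1 + p.2 p.1 + 2)) (η p) : ℂ)) =
      fun _ => (1 : ℂ) := by
    funext p
    have hne : ((p.1 : ℂ) + 1) ≠ 0 := Nat.cast_add_one_ne_zero p.1
    have hij : p.1 + 1 ≠ p.1 + p.2 p.1 + 2 := by omega
    simp only [hη, inner_add_left, inner_smul_left, inner_smul_right]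
    rw [hite, hite]
    simp only [if_neg hij, if_pos rfl, mul_zero, zero_add, mul_one]
    rw [show (starRingEnd ℂ) ((p.1 : ℂ) + 1) = ((p.1 : ℂ) + 1) by simp]
    field_simp
    simp
  rw [hconst] at hlim
  have h0 : (inner ℂ (0 : H) (0 : H) : ℂ) = 0 := inner_zero_left 0
  rw [h0] at hlim
  exact one_ne_zero (tendsto_nhds_unique tendsto_const_nhds hlim)

/-- On an infinite-dimensional Hilbert space there is no topology whose convergent nets are
precisely the meta weakly convergent nets. -/
theorem stmt_1 {H : Type*} [NormedAddCommGroup H] [InnerProductSpace ℂ H] [CompleteSpace H]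
    (hinf : ¬ FiniteDimensional ℂ H) :
    ¬ ∃ t : TopologicalSpace H,
        ∀ (A : Type) [Preorder A] [IsDirected A (· ≤ ·)] [Nonempty A]
          (ζ : A → H) (z : H),
          Filter.Tendsto ζ Filter.atTop (@nhds H t z) ↔ MetaWeakConv ζ z := by
  obtain ⟨e, he⟩ := exists_orthonormal_seq hinf
  rintro ⟨t, ht⟩
  set x : ℕ → ℕ → H := fun n m => e (n + 1) + ((n : ℂ) + 1) • e (n + m + 2) with hx
  have hA : ∀ n : ℕ, Tendsto (x n) atTop (@nhds H t (e (n + 1))) := fun n =>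
    (ht ℕ (x n) (e (n + 1))).mpr (mwA he n)
  have hB : Tendsto (fun n => e (n + 1)) atTop (@nhds H t 0) :=
    (ht ℕ (fun n => e (n + 1)) 0).mpr (mwB he)
  set f : ℕ × (ℕ → ℕ) → H := fun p => x p.1 (p.2 p.1) with hf
  have hdiag : Tendsto f atTop (@nhds H t 0) := by
    intro s hs
    rw [mem_nhds_iff] at hs
    obtain ⟨u, hus, huo, hu0⟩ := hs
    obtain ⟨N, hN⟩ := eventually_atTop.mp (hB (huo.mem_nhds hu0))
    have hchoice : ∀ n : ℕ, ∃ M : ℕ, ∀ m ≥ M, N ≤ n → x n m ∈ u := by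
      intro n
      by_cases h : N ≤ n
      · obtain ⟨M, hM⟩ := eventually_atTop.mp ((hA n) (huo.mem_nhds (hN n h)))
        exact ⟨M, fun m hm _ => hM m hm⟩
      · exact ⟨0, fun m _ h' => absurd h' h⟩
    choose φ₀ hφ₀ using hchoice
    rw [Filter.mem_map]
    refine mem_of_superset (Filter.mem_atTop ((N, φ₀) : ℕ × (ℕ → ℕ))) ?_
    rintro ⟨n, φ⟩ hp
    obtain ⟨hn, hφ⟩ := Prod.le_def.mp hp
    exact hus (hφ₀ n (φ n) (hφ n) hn)
  exact not_mw_diag he ((ht (ℕ × (ℕ → ℕ)) f 0).mp hdiag)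
end

section
/- Let (T_α) be a net of bounded self-adjoint operators on a Hilbert space H₀ with sup_{α≥α₀}‖T_α‖ < ∞, converging to the bounded self-adjoint operator T∞ in the strong operator topology. Then the spectrum of T∞ is contained in the limit set of the spectra: for every λ ∈ σ(T∞) there exists a net (λ_α) of reals with λ_α ∈ σ(T_α) for all α and λ_α → λ. -/
open Filter Metric

section Aux

variable {H : Type*} [NormedAddCommGroup H] [InnerProductSpace ℂ H] [CompleteSpace H]

/-- A self-adjoint operator bounded below is invertible. -/
lemma aux_isUnit_of_bddBelow (S : H →L[ℂ] H) (hS : IsSelfAdjoint S) {ε : ℝ} (hε : 0 < ε)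
    (h : ∀ x : H, ε * ‖x‖ ≤ ‖S x‖) : IsUnit S := by
  rw [ContinuousLinearMap.isUnit_iff_bijective,
    ContinuousLinearMap.bijective_iff_dense_range_and_antilipschitz]
  have h_anti : AntilipschitzWith (⟨ε, hε.le⟩ : NNReal)⁻¹ S := by
    refine S.antilipschitz_of_bound fun x => ?_
    change ‖x‖ ≤ ε⁻¹ * ‖S x‖
    rw [inv_mul_eq_div, le_div_iff₀ (by exact_mod_cast hε)]
    simpa [mul_comm] using h x
  refine ⟨?_, ⟨_, h_anti⟩⟩
  have _inst := h_anti.completeSpace_range_clm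
  rw [Submodule.topologicalClosure_eq_top_iff, Submodule.eq_bot_iff]
  intro x hx
  have hSx : S x = 0 := by
    have h1 : inner (𝕜 := ℂ) (S x) (S x) = 0 := by
      have := hx (S (S x)) ⟨S x, rfl⟩
      rwa [← ContinuousLinearMap.adjoint_inner_right, hS.adjoint_eq] at this
    simpa using h1
  have h2 := h x
  rw [hSx, norm_zero] at h2
  have : ‖x‖ ≤ 0 := by nlinarith [norm_nonneg x]
  exact norm_le_zero_iff.mp this

/-- Approximate eigenvectors for spectral points of self-adjoint operators. -/
lemma aux_approx_eigen (S : H →L[ℂ] H) (hS : IsSelfAdjoint S) (μ : ℝ)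
    (hμ : (μ : ℂ) ∈ spectrum ℂ S) {ε : ℝ} (hε : 0 < ε) :
    ∃ ξ : H, ‖ξ‖ = 1 ∧ ‖S ξ - (μ : ℂ) • ξ‖ < ε := by
  by_contra hcon
  push_neg at hcon
  set W : H →L[ℂ] H := S - algebraMap ℂ (H →L[ℂ] H) (μ : ℂ) with hW
  have hWsa : IsSelfAdjoint W := by
    refine hS.sub (IsSelfAdjoint.algebraMap _ ?_)
    rw [IsSelfAdjoint]
    exact Complex.conj_ofReal μ
  have hWx : ∀ x : H, W x = S x - (μ : ℂ) • x := by
    intro x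
    simp [hW, Algebra.algebraMap_eq_smul_one]
  have hbdd : ∀ x : H, ε * ‖x‖ ≤ ‖W x‖ := by
    intro x
    rcases eq_or_ne x 0 with rfl | hx
    · simp
    · have hxpos : (0:ℝ) < ‖x‖ := norm_pos_iff.mpr hx
      have hn : ‖(‖x‖⁻¹ : ℂ) • x‖ = 1 := by
        rw [norm_smul]
        simp [abs_of_pos hxpos]
        field_simp
      have h1 := hcon ((‖x‖⁻¹ : ℂ) • x) hn
      rw [← hWx, map_smul, norm_smul] at h1
      have h2 : ε ≤ ‖x‖⁻¹ * ‖W x‖ := by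
        simpa [abs_of_pos hxpos] using h1
      have h3 := (le_inv_mul_iff₀ hxpos).mp h2
      linarith [mul_comm ε ‖x‖, h3, mul_comm ‖x‖ ε]
  have hU := aux_isUnit_of_bddBelow W hWsa hε hbdd
  rw [spectrum.mem_iff] at hμ
  exact hμ (by simpa [hW] using hU.neg)

/-- Distance to spectrum bound for self-adjoint operators. -/
lemma aux_infDist_le (S : H →L[ℂ] H) (hS : IsSelfAdjoint S) (μ : ℝ) (ξ : H) :
    infDist μ (spectrum ℝ S) * ‖ξ‖ ≤ ‖S ξ - (μ : ℂ) • ξ‖ := by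
  set d := infDist μ (spectrum ℝ S) with hd
  rcases le_or_gt d 0 with h0 | h0
  · exact le_trans (mul_nonpos_of_nonpos_of_nonneg h0 (norm_nonneg ξ)) (norm_nonneg _)
  · have hμs : ∀ x ∈ spectrum ℝ S, d ≤ |x - μ| := by
      intro x hx
      have := infDist_le_dist_of_mem (x := μ) hx
      rwa [Real.dist_eq, abs_sub_comm] at this
    have hne : ∀ x ∈ spectrum ℝ S, x - μ ≠ 0 := by
      intro x hx hc
      have := hμs x hx
      rw [hc] at this
      simp at this
      linarith
    set g : ℝ → ℝ := fun x => (x - μ)⁻¹ with hg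
    have hgc : ContinuousOn g (spectrum ℝ S) := by
      apply ContinuousOn.inv₀
      · fun_prop
      · exact hne
    have hid : ContinuousOn (fun x : ℝ => x - μ) (spectrum ℝ S) := by fun_prop
    have hmul : cfc g S * (S - algebraMap ℝ (H →L[ℂ] H) μ) = 1 := by
      have h1 : S - algebraMap ℝ (H →L[ℂ] H) μ = cfc (fun x : ℝ => x - μ) S := by
        rw [cfc_sub _ _ S, cfc_id' ℝ S, cfc_const μ S]
      rw [h1, ← cfc_mul g _ S hgc hid, ← cfc_one (R := ℝ) S]
      apply cfc_congr
      intro x hx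
      show (x - μ)⁻¹ * (x - μ) = 1
      exact inv_mul_cancel₀ (hne x hx)
    have hnorm : ‖cfc g S‖ ≤ d⁻¹ := by
      refine norm_cfc_le (by positivity) fun x hx => ?_
      rw [Real.norm_eq_abs, hg]
      simp only [abs_inv]
      exact inv_anti₀ h0 (hμs x hx)
    have hξ : cfc g S ((S - algebraMap ℝ (H →L[ℂ] H) μ) ξ) = ξ := by
      have := congrArg (fun W : H →L[ℂ] H => W ξ) hmul
      simpa using this
    have h2 : ‖ξ‖ ≤ d⁻¹ * ‖(S - algebraMap ℝ (H →L[ℂ] H) μ) ξ‖ := by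
      calc ‖ξ‖ = ‖cfc g S ((S - algebraMap ℝ (H →L[ℂ] H) μ) ξ)‖ := by rw [hξ]
        _ ≤ ‖cfc g S‖ * ‖(S - algebraMap ℝ (H →L[ℂ] H) μ) ξ‖ :=
            (cfc g S).le_opNorm _
        _ ≤ d⁻¹ * ‖(S - algebraMap ℝ (H →L[ℂ] H) μ) ξ‖ :=
            mul_le_mul_of_nonneg_right hnorm (norm_nonneg _)
    have h3 : (S - algebraMap ℝ (H →L[ℂ] H) μ) ξ = S ξ - (μ : ℂ) • ξ := by
      simp [Algebra.algebraMap_eq_smul_one, Complex.coe_smul]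
    rw [h3] at h2
    have h4 := mul_le_mul_of_nonneg_left h2 h0.le
    rwa [← mul_assoc, mul_inv_cancel₀ h0.ne', one_mul] at h4

end Aux

/-- Spectral inclusion under strong operator convergence of a uniformly bounded net of
bounded self-adjoint operators: every point of the spectrum of the limit is the limit of a
net of spectral points of the approximants. -/
theorem stmt_7 {H : Type*} [NormedAddCommGroup H] [InnerProductSpace ℂ H] [CompleteSpace H]
    {A : Type*} [Preorder A] [IsDirected A (· ≤ ·)] [Nonempty A]
    (T : A → H →L[ℂ] H) (Tlim : H →L[ℂ] H)
    (hsa : ∀ α, IsSelfAdjoint (T α)) (hsalim : IsSelfAdjoint Tlim)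
    (α₀ : A) (C : ℝ) (hb : ∀ α, α₀ ≤ α → ‖T α‖ ≤ C)
    (hconv : ∀ ξ : H, Tendsto (fun α => T α ξ) atTop (nhds (Tlim ξ))) :
    ∀ μ : ℝ, (μ : ℂ) ∈ spectrum ℂ Tlim →
      ∃ l : A → ℝ, (∀ α, ((l α : ℂ) ∈ spectrum ℂ (T α))) ∧ Tendsto l atTop (nhds μ) := by
  intro μ hμ
  rcases subsingleton_or_nontrivial H with hsub | hnt
  · exfalso
    have : IsUnit ((algebraMap ℂ (H →L[ℂ] H)) (μ : ℂ) - Tlim) := by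
      have : Subsingleton (H →L[ℂ] H) := inferInstance
      exact isUnit_of_subsingleton _
    exact (spectrum.mem_iff.mp hμ) this
  · -- each spectrum is nonempty and compact
    have hcpt : ∀ α, IsCompact (spectrum ℝ (T α)) := fun α => spectrum.isCompact (T α)
    have hne : ∀ α, (spectrum ℝ (T α)).Nonempty := by
      intro α
      have h1 : (spectrum ℂ (T α)).Nonempty := spectrum.nonempty (T α)
      have h2 := (hsa α).spectrumRestricts.algebraMap_image
      rw [← h2] at h1
      exact h1.of_image
    -- choose nearest points
    have hnear : ∀ α, ∃ y ∈ spectrum ℝ (T α), infDist μ (spectrum ℝ (T α)) = dist μ y :=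
      fun α => (hcpt α).exists_infDist_eq_dist (hne α) μ
    choose l hl hld using hnear
    refine ⟨l, fun α => ?_, ?_⟩
    · have h2 := (hsa α).spectrumRestricts.algebraMap_image
      rw [← h2]
      exact ⟨l α, hl α, rfl⟩
    · rw [Metric.tendsto_nhds]
      intro ε hε
      obtain ⟨ξ, hξ1, hξ2⟩ := aux_approx_eigen Tlim hsalim μ hμ (half_pos hε)
      have hconvξ := (hconv ξ).eventually (Metric.ball_mem_nhds (Tlim ξ) (half_pos hε))
      filter_upwards [hconvξ] with α hα
      have hdist : ‖T α ξ - Tlim ξ‖ < ε / 2 := by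
        rwa [dist_eq_norm] at hα
      have key : infDist μ (spectrum ℝ (T α)) ≤ ‖T α ξ - (μ : ℂ) • ξ‖ := by
        have := aux_infDist_le (T α) (hsa α) μ ξ
        rwa [hξ1, mul_one] at this
      have tri : ‖T α ξ - (μ : ℂ) • ξ‖ ≤ ‖T α ξ - Tlim ξ‖ + ‖Tlim ξ - (μ : ℂ) • ξ‖ := by
        have := norm_sub_le_norm_sub_add_norm_sub (T α ξ) (Tlim ξ) ((μ : ℂ) • ξ)
        exact this
      rw [Real.dist_eq]
      have : dist μ (l α) < ε := by
        rw [← hld α]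
        calc infDist μ (spectrum ℝ (T α)) ≤ ‖T α ξ - (μ : ℂ) • ξ‖ := key
          _ < ε := by linarith
      rwa [dist_comm, Real.dist_eq] at this
end

section
/- Let (T_α)_{α∈A} and T∞ be self-adjoint operators (possibly unbounded) on a fixed Hilbert space H₀. If for some λ ∈ ⋂_α ρ(T_α) ∩ ρ(T∞) one has (λ − T_α)⁻¹ → (λ − T∞)⁻¹ in the strong operator topology, then for every φ ∈ C₀(ℝ; ℂ) (continuous functions vanishing at infinity) one has φ(T_α) → φ(T∞) in the strong operator topology. -/
open Filter ZeroAtInfty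

lemma transfer_aux {H : Type*} [NormedAddCommGroup H] [InnerProductSpace ℂ H]
    {A : Type*} [Preorder A]
    (T : A → H →ₗ.[ℂ] H) (Tlim : H →ₗ.[ℂ] H)
    (lam mu : ℂ) (S : A → H →L[ℂ] H) (Slim : H →L[ℂ] H)
    (hS : ∀ α (u : H), ∃ h : S α u ∈ (T α).domain, lam • S α u - T α ⟨S α u, h⟩ = u)
    (hSlim' : ∀ v : Tlim.domain, Slim (lam • (v : H) - Tlim v) = v)
    (hconv : ∀ ξ : H, Tendsto (fun α => S α ξ) atTop (nhds (Slim ξ)))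
    (P : A → H →L[ℂ] H) (Plim : H →L[ℂ] H)
    (C : ℝ) (hC : ∀ α, ‖P α‖ ≤ C)
    (hP' : ∀ α (v : (T α).domain), P α (mu • (v : H) - T α v) = v)
    (hPlim : ∀ u : H, ∃ h : Plim u ∈ Tlim.domain, mu • Plim u - Tlim ⟨Plim u, h⟩ = u)
    (ξ : H) : Tendsto (fun α => P α ξ) atTop (nhds (Plim ξ)) := by
  obtain ⟨hw, hweq⟩ := hPlim ξ
  set w := Plim ξ with hwdef
  set ζ := lam • w - Tlim ⟨w, hw⟩ with hζ
  have hSw : Slim ζ = w := hSlim' ⟨w, hw⟩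
  have key : ∀ α, P α ξ = S α ζ + (mu - lam) • P α (w - S α ζ) := by
    intro α
    obtain ⟨h1, h1eq⟩ := hS α ζ
    have e3 : mu • S α ζ - T α ⟨S α ζ, h1⟩
        = (mu - lam) • S α ζ + (lam • S α ζ - T α ⟨S α ζ, h1⟩) := by
      rw [sub_smul]; abel
    rw [h1eq] at e3
    have e4 := hP' α ⟨S α ζ, h1⟩
    rw [e3] at e4
    have e5 : ξ = (mu - lam) • w + ζ := by
      rw [hζ, ← hweq, sub_smul]; abel
    calc P α ξ = P α ((mu - lam) • (w - S α ζ) + ((mu - lam) • S α ζ + ζ)) := by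
          rw [smul_sub]; congr 1; rw [e5]; abel
      _ = (mu - lam) • P α (w - S α ζ) + S α ζ := by
          rw [map_add, map_smul, e4]
      _ = S α ζ + (mu - lam) • P α (w - S α ζ) := by abel
  have t1 : Tendsto (fun α => S α ζ) atTop (nhds w) := hSw ▸ hconv ζ
  have t2 : Tendsto (fun α => P α (w - S α ζ)) atTop (nhds 0) := by
    have hb : ∀ α, ‖P α (w - S α ζ)‖ ≤ C * ‖w - S α ζ‖ := fun α =>
      ((P α).le_opNorm _).trans (mul_le_mul_of_nonneg_right (hC α) (norm_nonneg _))
    have hg : Tendsto (fun α => C * ‖w - S α ζ‖) atTop (nhds 0) := by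
      have := ((tendsto_const_nhds (x := w)).sub t1).norm
      simpa using (this.const_mul C)
    exact squeeze_zero_norm hb hg
  have := t1.add (t2.const_smul (mu - lam))
  simp only [smul_zero, add_zero] at this
  exact Tendsto.congr (fun α => (key α).symm) this




local notation "⟪" x ", " y "⟫" => @inner ℂ _ _ x y

lemma adj_res {H : Type*} [NormedAddCommGroup H] [InnerProductSpace ℂ H] [CompleteSpace H]
    (T : H →ₗ.[ℂ] H) (hT : IsSelfAdjoint T) (R : H →L[ℂ] H)
    (hR : ∀ u, ∃ h : R u ∈ T.domain, Complex.I • R u - T ⟨R u, h⟩ = u)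
    (hR' : ∀ v : T.domain, R (Complex.I • (v : H) - T v) = v) :
    (∀ u : H, ∃ h : (ContinuousLinearMap.adjoint R) u ∈ T.domain,
      (-Complex.I) • (ContinuousLinearMap.adjoint R) u
        - T ⟨(ContinuousLinearMap.adjoint R) u, h⟩ = u) ∧
    (∀ v : T.domain, (ContinuousLinearMap.adjoint R) ((-Complex.I) • (v : H) - T v) = v) := by
  have hTT : T.adjoint = T := LinearPMap.isSelfAdjoint_def.mp hT
  have hd : Dense (T.domain : Set H) := hT.dense_domain
  obtain ⟨hdom, happ⟩ := LinearPMap.ext_iff.mp hTT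
  -- `R (T x) = I • R x - x`
  have hRT : ∀ x : T.domain, R (T x) = Complex.I • R ((x : H)) - (x : H) := by
    intro x
    have h := hR' x
    rw [map_sub, map_smul] at h
    have h2 : R (T x) + (Complex.I • R ((x : H)) - R (T x)) = Complex.I • R ((x : H)) := by abel
    rw [h] at h2
    exact eq_sub_of_add_eq h2
  -- `T (R u) = I • R u - u`
  have hTR : ∀ u : H, ∀ h : R u ∈ T.domain, T ⟨R u, h⟩ = Complex.I • R u - u := by
    intro u h
    obtain ⟨h', heq⟩ := hR u
    have h2 : T ⟨R u, h'⟩ + (Complex.I • R u - T ⟨R u, h'⟩) = Complex.I • R u := by abel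
    rw [heq] at h2
    exact eq_sub_of_add_eq h2
  -- the inner product identity for the adjoint
  have hip : ∀ u : H, ∀ x : T.domain,
      ⟪(-Complex.I) • (ContinuousLinearMap.adjoint R) u - u, (x : H)⟫
        = ⟪(ContinuousLinearMap.adjoint R) u, T x⟫ := by
    intro u x
    rw [ContinuousLinearMap.adjoint_inner_left, hRT x, inner_sub_left, inner_smul_left,
      inner_sub_right, inner_smul_right, ContinuousLinearMap.adjoint_inner_left]
    simp [Complex.conj_I]
  constructor
  · intro u
    have hyadj : (ContinuousLinearMap.adjoint R) u ∈ T.adjoint.domain :=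
      LinearPMap.mem_adjoint_domain_of_exists _
        ⟨(-Complex.I) • (ContinuousLinearMap.adjoint R) u - u, hip u⟩
    have hy : (ContinuousLinearMap.adjoint R) u ∈ T.domain := hdom ▸ hyadj
    refine ⟨hy, ?_⟩
    have hval : T.adjoint ⟨(ContinuousLinearMap.adjoint R) u, hyadj⟩
        = (-Complex.I) • (ContinuousLinearMap.adjoint R) u - u :=
      LinearPMap.adjoint_apply_eq hd _ (hip u)
    have hval' : T ⟨(ContinuousLinearMap.adjoint R) u, hy⟩
        = (-Complex.I) • (ContinuousLinearMap.adjoint R) u - u :=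
      (happ (hf := hyadj) (hg := hy)).symm.trans hval
    rw [hval']; abel
  · intro v
    -- symmetry of `T`
    have hfa := LinearPMap.adjoint_isFormalAdjoint hd
    have hsym : ∀ x y : T.domain, ⟪T x, (y : H)⟫ = ⟪(x : H), T y⟫ := by
      intro x y
      have hx : (x : H) ∈ T.adjoint.domain := by rw [hdom]; exact x.2
      have := hfa ⟨(x : H), hx⟩ y
      rwa [happ (x := (x : H)) (hf := hx) (hg := x.2)] at this
    apply ext_inner_right ℂ
    intro z
    obtain ⟨hz, _⟩ := hR z
    rw [ContinuousLinearMap.adjoint_inner_left, inner_sub_left, inner_smul_left]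
    have h1 : ⟪T v, R z⟫ = ⟪(v : H), T ⟨R z, hz⟩⟫ := hsym v ⟨R z, hz⟩
    rw [h1, hTR z hz, inner_sub_right, inner_smul_right]
    simp [Complex.conj_I]


open Filter ZeroAtInfty Complex Topology
open scoped ContinuousMapZero

noncomputable section

def Ksph : Set ℂ := Metric.sphere (-(Complex.I/2)) 2⁻¹

instance : Zero Ksph := ⟨⟨0, by
  simp [Ksph, Metric.mem_sphere, dist_eq_norm, norm_div, Complex.norm_I]⟩⟩

lemma Ksph_zero_coe : ((0 : Ksph) : ℂ) = 0 := rfl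

instance : Fact ((0 : ℂ) ∈ Ksph) := ⟨(0 : Ksph).2⟩

instance : CompactSpace Ksph :=
  inferInstanceAs (CompactSpace (Metric.sphere (-(Complex.I/2)) 2⁻¹))

lemma I_sub_ne (x : ℝ) : (Complex.I - (x : ℂ)) ≠ 0 := by
  intro h
  have := congrArg Complex.im h
  simp at this

lemma mem_Ksph (x : ℝ) : ((Complex.I - (x : ℂ))⁻¹ : ℂ) ∈ Ksph := by
  have hd := I_sub_ne x
  have key : (Complex.I - (x:ℂ))⁻¹ - -(Complex.I/2)
      = (Complex.I * (-Complex.I - (x:ℂ)))/(2*(Complex.I - (x:ℂ))) := by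
    field_simp
    linear_combination 2 * Complex.I_sq
  have hstar : (starRingEnd ℂ) (Complex.I - (x:ℂ)) = -Complex.I - (x:ℂ) := by
    simp [map_sub, Complex.conj_I, Complex.conj_ofReal]
  have hnorm : ‖Complex.I - (x:ℂ)‖ ≠ 0 := norm_ne_zero_iff.mpr hd
  rw [Ksph, Metric.mem_sphere, dist_eq_norm, key, norm_div, norm_mul, norm_mul,
    Complex.norm_I, ← hstar, RCLike.norm_conj]
  rw [show ‖(2:ℂ)‖ = 2 by simp]
  have habs : ‖Complex.I - (x:ℂ)‖ ≠ 0 := by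
    simpa using hnorm
  field_simp

def rho : C(ℝ, Ksph) :=
  ⟨fun x => ⟨(Complex.I - (x : ℂ))⁻¹, mem_Ksph x⟩,
    Continuous.subtype_mk ((continuous_const.sub Complex.continuous_ofReal).inv₀ I_sub_ne) _⟩

lemma rho_cocompact : Tendsto rho (cocompact ℝ) (𝓝 (0 : Ksph)) := by
  rw [tendsto_subtype_rng]
  show Tendsto (fun x : ℝ => ((Complex.I - (x:ℂ))⁻¹ : ℂ)) (cocompact ℝ) (𝓝 (0:ℂ))
  have h1 : Tendsto (fun x : ℝ => ‖Complex.I - (x:ℂ)‖) (cocompact ℝ) atTop := by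
    apply tendsto_atTop_mono (fun x : ℝ => ?_) tendsto_norm_cocompact_atTop
    calc ‖x‖ = |(Complex.I - (x:ℂ)).re| := by simp
      _ ≤ ‖Complex.I - (x:ℂ)‖ := Complex.abs_re_le_norm _
  have h2 : Tendsto (fun x : ℝ => ‖Complex.I - (x:ℂ)‖⁻¹) (cocompact ℝ) (𝓝 0) :=
    h1.inv_tendsto_atTop
  rw [tendsto_zero_iff_norm_tendsto_zero]
  simpa [norm_inv] using h2

/-- pullback of `C(Ksph, ℂ)₀` to `C₀(ℝ, ℂ)` along `rho`. -/
def pull (g : C(Ksph, ℂ)₀) : C₀(ℝ, ℂ) where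
  toFun := fun x => g (rho x)
  continuous_toFun := (map_continuous g).comp rho.continuous
  zero_at_infty' := by
    have := ((map_continuous g).tendsto (0 : Ksph)).comp rho_cocompact
    simpa [Function.comp_def] using this

@[simp] lemma pull_apply (g : C(Ksph, ℂ)₀) (x : ℝ) : pull g x = g (rho x) := rfl

lemma pull_add (f g : C(Ksph, ℂ)₀) : pull (f + g) = pull f + pull g := by
  ext x; simp

lemma pull_mul (f g : C(Ksph, ℂ)₀) : pull (f * g) = pull f * pull g := by
  ext x; simp

lemma pull_smul (c : ℂ) (f : C(Ksph, ℂ)₀) : pull (c • f) = c • pull f := by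
  ext x; simp

lemma pull_star (f : C(Ksph, ℂ)₀) : pull (star f) = star (pull f) := by
  ext x; simp

lemma pull_zero : pull 0 = 0 := by ext x; simp

lemma pull_sub (f g : C(Ksph, ℂ)₀) : pull (f - g) = pull f - pull g := by
  ext x
  show (f - g) (rho x) = f (rho x) - g (rho x)
  rfl

lemma pull_norm_le (g : C(Ksph, ℂ)₀) : ‖pull g‖ ≤ ‖g‖ := by
  rw [← ZeroAtInftyContinuousMap.norm_toBCF_eq_norm]
  rw [BoundedContinuousFunction.norm_le (norm_nonneg g)]
  intro x
  calc ‖(pull g).toBCF x‖ = ‖g (rho x)‖ := rfl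
    _ ≤ ‖(g : C(Ksph, ℂ))‖ := ContinuousMap.norm_coe_le_norm _ _
    _ = ‖g‖ := (ContinuousMapZero.norm_def g).symm

section
lemma Ksph_normSq' {z : ℂ} (hz : z ∈ Metric.sphere (-(Complex.I/2)) 2⁻¹) :
    Complex.normSq z = -z.im := by
  rw [Metric.mem_sphere, dist_eq_norm] at hz
  have h2 : Complex.normSq (z - -(Complex.I/2)) = 4⁻¹ := by
    have := congrArg (fun t : ℝ => t^2) hz
    norm_num [Complex.sq_norm] at this
    simpa using this
  rw [Complex.normSq_apply] at h2 ⊢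
  simp only [Complex.sub_re, Complex.sub_im, Complex.neg_re, Complex.neg_im,
    Complex.div_re, Complex.div_im, Complex.I_re, Complex.I_im] at h2
  norm_num at h2
  nlinarith [h2]

lemma Ksph_inv_im' {z : ℂ} (hz : z ∈ Metric.sphere (-(Complex.I/2)) 2⁻¹) (h0 : z ≠ 0) :
    (z⁻¹).im = 1 := by
  have hns := Ksph_normSq' hz
  have him : z.im ≠ 0 := by
    intro h
    apply h0
    have : Complex.normSq z = 0 := by rw [hns, h, neg_zero]
    exact Complex.normSq_eq_zero.mp this
  rw [Complex.inv_im, hns]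
  field_simp

lemma pull_surjective (φ : C₀(ℝ, ℂ)) : ∃ g : C(Ksph, ℂ)₀, pull g = φ := by
  classical
  set F : Ksph → ℂ := fun z => if (z:ℂ) = 0 then 0 else φ ((Complex.I - (z:ℂ)⁻¹).re) with hF
  have hcont : Continuous F := by
    rw [continuous_iff_continuousAt]
    intro z₀
    by_cases h0 : (z₀ : ℂ) = 0
    · rw [ContinuousAt]
      have hF0 : F z₀ = 0 := by simp [hF, h0]
      rw [hF0, ← nhdsNE_sup_pure z₀, tendsto_sup]
      constructor
      · -- on the punctured neighborhood
        have hne : ∀ z : Ksph, z ≠ z₀ → (z : ℂ) ≠ 0 := by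
          intro z hz h
          exact hz (Subtype.ext (h.trans h0.symm))
        have key : Tendsto (fun z : Ksph => (Complex.I - (z:ℂ)⁻¹).re) (𝓝[≠] z₀)
            (cocompact ℝ) := by
          rw [← Metric.cobounded_eq_cocompact, ← comap_norm_atTop, tendsto_comap_iff]
          have hlow : Tendsto (fun z : Ksph => ‖(z:ℂ)‖⁻¹ - 1) (𝓝[≠] z₀) atTop := by
            apply tendsto_atTop_add_const_right _ (-1 : ℝ)
            have hval : Tendsto (fun z : Ksph => ‖(z:ℂ)‖) (𝓝[≠] z₀) (𝓝[>] 0) := by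
              rw [tendsto_nhdsWithin_iff]
              constructor
              · have : Tendsto (fun z : Ksph => (z:ℂ)) (𝓝[≠] z₀) (𝓝 0) := by
                  rw [← h0]
                  exact (continuous_subtype_val.tendsto z₀).mono_left nhdsWithin_le_nhds
                simpa using this.norm
              · filter_upwards [self_mem_nhdsWithin] with z hz
                exact norm_pos_iff.mpr (hne z hz)
            exact tendsto_inv_nhdsGT_zero.comp hval
          apply tendsto_atTop_mono' _ _ hlow
          filter_upwards [self_mem_nhdsWithin] with z hz
          have hz0 : (z : ℂ) ≠ 0 := hne z hz
          have him : ((z:ℂ)⁻¹).im = 1 := Ksph_inv_im' (by exact z.2) hz0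
          have habs : ‖(z:ℂ)⁻¹‖ ≤ |((z:ℂ)⁻¹).re| + |((z:ℂ)⁻¹).im| :=
            Complex.norm_le_abs_re_add_abs_im _
          have hre : (Complex.I - (z:ℂ)⁻¹).re = -((z:ℂ)⁻¹).re := by
            simp [Complex.sub_re]
          simp only [Function.comp_apply]
          rw [Real.norm_eq_abs, hre, abs_neg]
          have habs2 : ‖(z:ℂ)⁻¹‖ = ‖(z:ℂ)‖⁻¹ := by
            rw [norm_inv]
          rw [him] at habs
          rw [habs2] at habs
          rw [abs_one] at habs
          linarith
        have := (zero_at_infty φ).comp key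
        apply Tendsto.congr' _ this
        filter_upwards [self_mem_nhdsWithin] with z hz
        simp only [Function.comp_apply, hF]
        rw [if_neg (hne z hz)]
      · have : Tendsto F (pure z₀) (𝓝 (F z₀)) := tendsto_pure_nhds F z₀
        rwa [hF0] at this
    · -- z₀ ≠ 0 : locally equal to a continuous function
      have hcont' : ContinuousAt (fun z : Ksph => φ ((Complex.I - (z:ℂ)⁻¹).re)) z₀ := by
        have h1 : ContinuousAt (fun z : Ksph => (z:ℂ)) z₀ := continuous_subtype_val.continuousAt
        have h2 : ContinuousAt (fun z : Ksph => ((z:ℂ))⁻¹) z₀ := h1.inv₀ h0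
        have h3 : ContinuousAt (fun z : Ksph => Complex.I - ((z:ℂ))⁻¹) z₀ :=
          continuousAt_const.sub h2
        have h4 : ContinuousAt (fun z : Ksph => (Complex.I - ((z:ℂ))⁻¹).re) z₀ :=
          Complex.continuous_re.continuousAt.comp h3
        exact (map_continuous φ).continuousAt.comp h4
      apply ContinuousAt.congr hcont'
      have hopen : IsOpen {z : Ksph | (z:ℂ) ≠ 0} :=
        isOpen_compl_singleton.preimage continuous_subtype_val
      filter_upwards [hopen.mem_nhds h0] with z hz
      simp only [hF]
      rw [if_neg hz]
  refine ⟨⟨⟨F, hcont⟩, by simp [hF, Ksph_zero_coe]⟩, ?_⟩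
  ext x
  have hne : ((rho x : Ksph) : ℂ) ≠ 0 := by
    show ((Complex.I - (x:ℂ))⁻¹ : ℂ) ≠ 0
    exact inv_ne_zero (I_sub_ne x)
  show F (rho x) = φ x
  rw [hF]
  simp only
  rw [if_neg hne]
  have : ((rho x : Ksph) : ℂ)⁻¹ = Complex.I - (x:ℂ) := by
    show ((Complex.I - (x:ℂ))⁻¹)⁻¹ = _
    rw [inv_inv]
  rw [this]
  simp
end

/-- Strong resolvent convergence implies strong convergence of the `C₀`-functional calculus
for (possibly unbounded) self-adjoint operators `T_α, T∞` on a Hilbert space `H`.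

The operators are encoded as self-adjoint `LinearPMap`s; `R α` (resp. `Rlim`) is the
resolvent `(i − T_α)⁻¹` (characterized algebraically), and `Φ α` (resp. `Φlim`) is the
functional calculus of `T_α` on `C₀(ℝ, ℂ)`, pinned down as the non-unital star algebra
homomorphism sending the resolvent function `x ↦ (i − x)⁻¹` to the resolvent operator.
If for some `λ` in all the resolvent sets the resolvents `S α = (λ − T_α)⁻¹` converge in the
strong operator topology to `Slim = (λ − T∞)⁻¹`, then `Φ α φ → Φlim φ` strongly for every
`φ ∈ C₀(ℝ, ℂ)`. -/
theorem stmt_9 {H : Type*} [NormedAddCommGroup H] [InnerProductSpace ℂ H] [CompleteSpace H]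
    {A : Type*} [Preorder A] [IsDirected A (· ≤ ·)] [Nonempty A]
    (T : A → H →ₗ.[ℂ] H) (Tlim : H →ₗ.[ℂ] H)
    (hsa : ∀ α, IsSelfAdjoint (T α)) (hsalim : IsSelfAdjoint Tlim)
    -- the resolvents at `i`
    (R : A → H →L[ℂ] H) (Rlim : H →L[ℂ] H)
    (hR : ∀ α (u : H), ∃ h : R α u ∈ (T α).domain,
      Complex.I • R α u - T α ⟨R α u, h⟩ = u)
    (hR' : ∀ α (v : (T α).domain), R α (Complex.I • (v : H) - T α v) = v)
    (hRlim : ∀ u : H, ∃ h : Rlim u ∈ Tlim.domain,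
      Complex.I • Rlim u - Tlim ⟨Rlim u, h⟩ = u)
    (hRlim' : ∀ v : Tlim.domain, Rlim (Complex.I • (v : H) - Tlim v) = v)
    -- the functional calculi on `C₀(ℝ, ℂ)`
    (Φ : A → C₀(ℝ, ℂ) →⋆ₙₐ[ℂ] (H →L[ℂ] H)) (Φlim : C₀(ℝ, ℂ) →⋆ₙₐ[ℂ] (H →L[ℂ] H))
    (r : C₀(ℝ, ℂ)) (hr : ∀ x : ℝ, r x = (Complex.I - (x : ℂ))⁻¹)
    (hΦ : ∀ α, Φ α r = R α) (hΦlim : Φlim r = Rlim)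
    -- a common resolvent point `λ` with strong convergence of the resolvents
    (lam : ℂ) (S : A → H →L[ℂ] H) (Slim : H →L[ℂ] H)
    (hS : ∀ α (u : H), ∃ h : S α u ∈ (T α).domain,
      lam • S α u - T α ⟨S α u, h⟩ = u)
    (hS' : ∀ α (v : (T α).domain), S α (lam • (v : H) - T α v) = v)
    (hSlim : ∀ u : H, ∃ h : Slim u ∈ Tlim.domain,
      lam • Slim u - Tlim ⟨Slim u, h⟩ = u)
    (hSlim' : ∀ v : Tlim.domain, Slim (lam • (v : H) - Tlim v) = v)
    (hconv : ∀ ξ : H, Tendsto (fun α => S α ξ) atTop (nhds (Slim ξ))) :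
    ∀ (φ : C₀(ℝ, ℂ)) (ξ : H), Tendsto (fun α => Φ α φ ξ) atTop (nhds (Φlim φ ξ)) := by
  intro φ ξ
  have hbound : ∀ (ψ : C₀(ℝ, ℂ)) α, ‖Φ α ψ‖ ≤ ‖ψ‖ := fun ψ α =>
    NonUnitalStarAlgHom.norm_apply_le (Φ α) ψ
  have hboundlim : ∀ ψ : C₀(ℝ, ℂ), ‖Φlim ψ‖ ≤ ‖ψ‖ := fun ψ =>
    NonUnitalStarAlgHom.norm_apply_le Φlim ψ
  have hpull_id : pull (ContinuousMapZero.id Ksph) = r := by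
    ext x
    rw [hr x]
    rfl
  have hpull_star_id : pull (star (ContinuousMapZero.id Ksph)) = star r := by
    rw [pull_star, hpull_id]
  have hbR : ∀ α, ‖R α‖ ≤ ‖r‖ := fun α => (hΦ α) ▸ hbound r α
  have hconvR : ∀ η : H, Tendsto (fun α => R α η) atTop (nhds (Rlim η)) := fun η =>
    transfer_aux T Tlim lam Complex.I S Slim hS hSlim' hconv R Rlim ‖r‖ hbR hR' hRlim η
  have hadj := fun α => adj_res (T α) (hsa α) (R α) (hR α) (hR' α)
  have hadjlim := adj_res Tlim hsalim Rlim hRlim hRlim'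
  have hbRadj : ∀ α, ‖ContinuousLinearMap.adjoint (R α)‖ ≤ ‖r‖ := fun α => by
    rw [← ContinuousLinearMap.star_eq_adjoint, norm_star]; exact hbR α
  have hconvRadj : ∀ η : H, Tendsto (fun α => ContinuousLinearMap.adjoint (R α) η) atTop
      (nhds (ContinuousLinearMap.adjoint Rlim η)) := fun η =>
    transfer_aux T Tlim lam (-Complex.I) S Slim hS hSlim' hconv
      (fun α => ContinuousLinearMap.adjoint (R α)) (ContinuousLinearMap.adjoint Rlim)
      ‖r‖ hbRadj (fun α => (hadj α).2) hadjlim.1 η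
  have main : ∀ g : C(Ksph, ℂ)₀, ∀ η : H,
      Tendsto (fun α => Φ α (pull g) η) atTop (nhds (Φlim (pull g) η)) := by
    intro g
    induction g using ContinuousMapZero.induction_on_of_compact with
    | zero =>
      intro η
      simp only [pull_zero, map_zero, ContinuousLinearMap.zero_apply]
      exact tendsto_const_nhds
    | id =>
      intro η
      simp only [hpull_id, hΦ, hΦlim]
      exact hconvR η
    | star_id =>
      intro η
      simp only [hpull_star_id, map_star, hΦ, hΦlim, ContinuousLinearMap.star_eq_adjoint]
      exact hconvRadj η
    | add f g hf hg =>
      intro η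
      simp only [pull_add, map_add, ContinuousLinearMap.add_apply]
      exact (hf η).add (hg η)
    | mul f g hf hg =>
      intro η
      simp only [pull_mul, map_mul, ContinuousLinearMap.mul_apply]
      have h1 : Tendsto (fun α => Φ α (pull f) (Φ α (pull g) η)
          - Φ α (pull f) (Φlim (pull g) η)) atTop (nhds 0) := by
        apply squeeze_zero_norm
          (a := fun α => ‖pull f‖ * ‖Φ α (pull g) η - Φlim (pull g) η‖)
        · intro α
          rw [← map_sub]
          exact ((Φ α (pull f)).le_opNorm _).trans
            (mul_le_mul_of_nonneg_right (hbound _ α) (norm_nonneg _))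
        · have hz := tendsto_sub_nhds_zero_iff.mpr (hg η)
          have h2 := hz.norm.const_mul ‖pull f‖
          simpa using h2
      have h2 := hf (Φlim (pull g) η)
      have h3 := h1.add h2
      rw [zero_add] at h3
      refine h3.congr fun α => ?_
      abel
    | smul c f hf =>
      intro η
      simp only [pull_smul, map_smul, ContinuousLinearMap.smul_apply]
      exact (hf η).const_smul c
    | frequently f hfr =>
      intro η
      rw [Metric.tendsto_nhds]
      intro ε hε
      have hδ : 0 < ε / 3 / (‖η‖ + 1) := by positivity
      obtain ⟨g, hgball, hpg⟩ := (Metric.nhds_basis_ball.frequently_iff.mp hfr) _ hδ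
      have hfg : ‖pull f - pull g‖ ≤ ε / 3 / (‖η‖ + 1) := by
        rw [← pull_sub]
        refine (pull_norm_le _).trans ?_
        rw [Metric.mem_ball, dist_comm, dist_eq_norm] at hgball
        exact hgball.le
      have hdist : ∀ (Ψ : C₀(ℝ, ℂ) →⋆ₙₐ[ℂ] (H →L[ℂ] H)), (∀ ψ, ‖Ψ ψ‖ ≤ ‖ψ‖) →
          ‖Ψ (pull f) η - Ψ (pull g) η‖ ≤ ε / 3 := by
        intro Ψ hb
        rw [← ContinuousLinearMap.sub_apply, ← map_sub]
        calc ‖Ψ (pull f - pull g) η‖ ≤ ‖Ψ (pull f - pull g)‖ * ‖η‖ :=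
              (Ψ (pull f - pull g)).le_opNorm η
          _ ≤ ‖pull f - pull g‖ * ‖η‖ :=
              mul_le_mul_of_nonneg_right (hb _) (norm_nonneg _)
          _ ≤ (ε / 3 / (‖η‖ + 1)) * (‖η‖ + 1) := by
              apply mul_le_mul hfg (by linarith [norm_nonneg η]) (norm_nonneg η) hδ.le
          _ = ε / 3 := by field_simp
      have hmid := hpg η
      rw [Metric.tendsto_nhds] at hmid
      filter_upwards [hmid (ε / 3) (by linarith)] with α hα
      have d1 : dist (Φ α (pull f) η) (Φ α (pull g) η) ≤ ε / 3 := by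
        rw [dist_eq_norm]; exact hdist (Φ α) (fun ψ => hbound ψ α)
      have d3 : dist (Φlim (pull g) η) (Φlim (pull f) η) ≤ ε / 3 := by
        rw [dist_eq_norm, norm_sub_rev]; exact hdist Φlim hboundlim
      calc dist (Φ α (pull f) η) (Φlim (pull f) η)
          ≤ dist (Φ α (pull f) η) (Φ α (pull g) η)
            + dist (Φ α (pull g) η) (Φlim (pull f) η) := dist_triangle _ _ _
        _ ≤ dist (Φ α (pull f) η) (Φ α (pull g) η)
            + (dist (Φ α (pull g) η) (Φlim (pull g) η)
              + dist (Φlim (pull g) η) (Φlim (pull f) η)) := by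
            gcongr
            exact dist_triangle _ _ _
        _ < ε := by
            rw [show ε = ε / 3 + (ε / 3 + ε / 3) by ring]
            exact add_lt_add_of_le_of_lt d1 (add_lt_add_of_lt_of_le hα d3)
  obtain ⟨g, hg⟩ := pull_surjective φ
  rw [← hg]
  exact main g ξ
end
end

section
/- Let X be a topological space, (V_x)_{x∈X} a family of topological vector spaces, and p = (p_i(x))_{i∈I, x∈X} families of seminorms generating the topology of each V_x. Let 𝒞 be a continuous subspace of sections (i.e. for every f ∈ 𝒞 and i ∈ I the function x ↦ p_i(x)(f(x)) is continuous). Define 𝒞̄ to be the set of all sections g such that for every i ∈ I, x ∈ X, ε > 0 there exist f ∈ 𝒞 and a neighborhood U of x with p_i(y)(g(y) − f(y)) ≤ ε for all y ∈ U. Then 𝒞̄ is itself a continuous subspace: for every g ∈ 𝒞̄ and i ∈ I, the function x ↦ p_i(x)(g(x)) is continuous. -/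
/-- If `𝒞` is a continuous subspace of sections of a field of locally convex spaces (given by
seminorms `p i x`), then every section `g` in its local uniform closure again has continuous
seminorm functions `x ↦ p i x (g x)`. -/
theorem stmt_11 {X I 𝕜 : Type*} [TopologicalSpace X] [NormedField 𝕜]
    {V : X → Type*} [∀ x, AddCommGroup (V x)] [∀ x, Module 𝕜 (V x)]
    (p : I → ∀ x, Seminorm 𝕜 (V x))
    (C : Submodule 𝕜 (∀ x, V x))
    (hcont : ∀ f ∈ C, ∀ i : I, Continuous fun x => p i x (f x))
    (g : ∀ x, V x)
    (hg : ∀ (i : I) (x : X), ∀ ε > (0 : ℝ), ∃ f ∈ C, ∃ U ∈ nhds x,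
      ∀ y ∈ U, p i y (g y - f y) ≤ ε) :
    ∀ i : I, Continuous fun x => p i x (g x) := by
  intro i
  rw [continuous_iff_continuousAt]
  intro x
  rw [ContinuousAt, Metric.tendsto_nhds]
  intro ε hε
  obtain ⟨f, hf, U, hU, hUf⟩ := hg i x (ε / 3) (by linarith)
  have hfc : ∀ᶠ y in nhds x, dist (p i y (f y)) (p i x (f x)) < ε / 3 := by
    have h := (hcont f hf i).continuousAt (x := x)
    rw [ContinuousAt, Metric.tendsto_nhds] at h
    exact h _ (by linarith)
  filter_upwards [hfc, hU] with y h1 h2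
  have hx : x ∈ U := mem_of_mem_nhds hU
  have a : |p i y (g y) - p i y (f y)| ≤ ε / 3 :=
    le_trans (abs_sub_map_le_sub (p i y) _ _) (hUf y h2)
  have b : |p i x (g x) - p i x (f x)| ≤ ε / 3 :=
    le_trans (abs_sub_map_le_sub (p i x) _ _) (hUf x hx)
  rw [Real.dist_eq] at h1 ⊢
  have := abs_sub (p i y (g y)) (p i x (g x))
  calc |p i y (g y) - p i x (g x)|
      ≤ |p i y (g y) - p i y (f y)| + |p i y (f y) - p i x (f x)|
        + |p i x (f x) - p i x (g x)| := by
        have := abs_sub_le (p i y (g y)) (p i y (f y)) (p i x (g x))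
        have := abs_sub_le (p i y (f y)) (p i x (f x)) (p i x (g x))
        linarith
    _ < ε := by rw [abs_sub_comm (p i x (f x))] at *; linarith
end

section
/- Let 𝒞 be a continuous, locally uniformly closed subspace of sections of a field of locally convex spaces over X. Then 𝒞 is a module over C(X): for every f ∈ 𝒞 and every continuous function φ : X → 𝕂, the section x ↦ φ(x)·f(x) belongs to 𝒞. -/
/-- A continuous, locally uniformly closed subspace of sections of a field of locally convex
spaces is a module over `C(X)`: multiplying a section in `𝒞` by a continuous scalar function
gives again a section in `𝒞`. -/
theorem stmt_13 {X I 𝕜 : Type*} [TopologicalSpace X] [NormedField 𝕜]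
    {V : X → Type*} [∀ x, AddCommGroup (V x)] [∀ x, Module 𝕜 (V x)]
    (p : I → ∀ x, Seminorm 𝕜 (V x))
    (C : Submodule 𝕜 (∀ x, V x))
    (hcont : ∀ f ∈ C, ∀ i : I, Continuous fun x => p i x (f x))
    (hluc : ∀ g : ∀ x, V x,
      (∀ (i : I) (x : X), ∀ ε > (0 : ℝ), ∃ f ∈ C, ∃ U ∈ nhds x,
        ∀ y ∈ U, p i y (g y - f y) ≤ ε) → g ∈ C) :
    ∀ f ∈ C, ∀ φ : X → 𝕜, Continuous φ → (fun x => φ x • f x) ∈ C := by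
  intro f hf φ hφ
  apply hluc
  intro i x ε hε
  refine ⟨φ x • f, C.smul_mem _ hf, ?_⟩
  set M : ℝ := p i x (f x) + 1 with hM
  have hM0 : 0 < M := by positivity
  have h1 : {y | ‖φ y - φ x‖ < ε / M} ∈ nhds x := by
    have : Continuous fun y => ‖φ y - φ x‖ := (hφ.sub continuous_const).norm
    have := this.continuousAt (x := x)
    exact this.preimage_mem_nhds
      (isOpen_Iio.mem_nhds (show ‖φ x - φ x‖ ∈ Set.Iio (ε / M) by
        simp [div_pos hε hM0]))
  have h2 : {y | p i y (f y) < M} ∈ nhds x := by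
    have := (hcont f hf i).continuousAt (x := x)
    exact this.preimage_mem_nhds
      (isOpen_Iio.mem_nhds (show p i x (f x) ∈ Set.Iio M by simp [hM]))
  refine ⟨_, Filter.inter_mem h1 h2, ?_⟩
  rintro y ⟨hy1, hy2⟩
  have : φ y • f y - φ x • f y = (φ y - φ x) • f y := by
    rw [sub_smul]
  rw [show (fun x => φ x • f x) y - (φ x • f) y = (φ y - φ x) • f y by
    simp [sub_smul]]
  rw [map_smul_eq_mul]
  calc ‖φ y - φ x‖ * p i y (f y) ≤ (ε / M) * M := by
        apply mul_le_mul hy1.le hy2.le (apply_nonneg _ _) (le_of_lt (div_pos hε hM0))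
    _ = ε := by field_simp
end

section
/- Let (b_α)_{α∈A} and b∞ be bounded nonnegative symmetric bilinear forms on a Hilbert space H₀, with associated bounded self-adjoint operators B_α, B∞ (i.e. b_α[u,v] = ⟨B_α u, v⟩). Then B_α → B∞ in the strong operator topology if and only if the forms b_α converge to b∞ in the Mosco sense: (M1) for every net u_α → u∞ weakly, b∞[u∞] + ‖u∞‖² ≤ liminf_α (b_α[u_α] + ‖u_α‖²); (M2) for every η ∈ H₀ there exist η_α → η in norm with b_α[η_α] → b∞[η]. -/
open Filter ENNReal RCLike

section MoscoAux

variable {𝕜 H : Type*} [RCLike 𝕜] [NormedAddCommGroup H] [InnerProductSpace 𝕜 H]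
  [CompleteSpace H]

/-- Quadratic-form expansion for a self-adjoint operator. -/
lemma mosco_qf_expand (T : H →L[𝕜] H) (hT : IsSelfAdjoint T) (x y : H) (t : ℝ) :
    re (inner 𝕜 (T (x + (t : 𝕜) • y)) (x + (t : 𝕜) • y) : 𝕜)
      = re (inner 𝕜 (T x) x : 𝕜) + 2 * t * re (inner 𝕜 (T x) y : 𝕜)
        + t ^ 2 * re (inner 𝕜 (T y) y : 𝕜) := by
  have hs : ∀ a b : H, (inner 𝕜 (T a) b : 𝕜) = inner 𝕜 a (T b) := hT.isSymmetric
  have h1 : T (x + (t : 𝕜) • y) = T x + (t : 𝕜) • T y := by rw [map_add, map_smul]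
  have hc : (inner 𝕜 (T y) x : 𝕜) = starRingEnd 𝕜 (inner 𝕜 (T x) y) := by
    rw [hs y x, inner_conj_symm]
  rw [h1, inner_add_left, inner_add_right, inner_add_right,
    inner_smul_left, inner_smul_right, inner_smul_left, inner_smul_right, hc]
  simp only [map_add, map_mul, conj_ofReal, RCLike.conj_re, mul_re, ofReal_re, ofReal_im,
    RCLike.conj_im]
  ring

lemma mosco_norm_expand (x y : H) (t : ℝ) :
    ‖x + (t : 𝕜) • y‖ ^ 2
      = ‖x‖ ^ 2 + 2 * t * re (inner 𝕜 x y : 𝕜) + t ^ 2 * ‖y‖ ^ 2 := by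
  have h := mosco_qf_expand (𝕜 := 𝕜) (1 : H →L[𝕜] H) (IsSelfAdjoint.one (H →L[𝕜] H)) x y t
  simpa only [ContinuousLinearMap.one_apply, inner_self_eq_norm_sq] using h

lemma mosco_qf_diff (T : H →L[𝕜] H) {C : ℝ} (hC : ‖T‖ ≤ C) (u v : H) :
    |re (inner 𝕜 (T v) v : 𝕜) - re (inner 𝕜 (T u) u : 𝕜)| ≤ C * ((‖v‖ + ‖u‖) * ‖v - u‖) := by
  have hdec : (inner 𝕜 (T v) v : 𝕜) - inner 𝕜 (T u) u
      = inner 𝕜 (T (v - u)) v + inner 𝕜 (T u) (v - u) := by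
    rw [map_sub, inner_sub_left, inner_sub_right]; ring
  have h1 : ‖T (v - u)‖ ≤ C * ‖v - u‖ :=
    le_trans (T.le_opNorm _) (mul_le_mul_of_nonneg_right hC (norm_nonneg _))
  have h2 : ‖T u‖ ≤ C * ‖u‖ :=
    le_trans (T.le_opNorm _) (mul_le_mul_of_nonneg_right hC (norm_nonneg _))
  calc |re (inner 𝕜 (T v) v : 𝕜) - re (inner 𝕜 (T u) u : 𝕜)|
      = |re ((inner 𝕜 (T v) v : 𝕜) - inner 𝕜 (T u) u)| := by rw [map_sub]
    _ ≤ ‖(inner 𝕜 (T v) v : 𝕜) - inner 𝕜 (T u) u‖ := abs_re_le_norm _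
    _ = ‖(inner 𝕜 (T (v - u)) v : 𝕜) + inner 𝕜 (T u) (v - u)‖ := by rw [hdec]
    _ ≤ ‖(inner 𝕜 (T (v - u)) v : 𝕜)‖ + ‖(inner 𝕜 (T u) (v - u) : 𝕜)‖ := norm_add_le _ _
    _ ≤ ‖T (v - u)‖ * ‖v‖ + ‖T u‖ * ‖v - u‖ :=
        add_le_add (norm_inner_le_norm _ _) (norm_inner_le_norm _ _)
    _ ≤ (C * ‖v - u‖) * ‖v‖ + (C * ‖u‖) * ‖v - u‖ :=
        add_le_add (mul_le_mul_of_nonneg_right h1 (norm_nonneg _))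
          (mul_le_mul_of_nonneg_right h2 (norm_nonneg _))
    _ = C * ((‖v‖ + ‖u‖) * ‖v - u‖) := by ring

lemma mosco_qf_bound (T : H →L[𝕜] H) {C : ℝ} (hC : ‖T‖ ≤ C) (u : H) :
    re (inner 𝕜 (T u) u : 𝕜) ≤ C * ‖u‖ ^ 2 := by
  calc re (inner 𝕜 (T u) u : 𝕜) ≤ |re (inner 𝕜 (T u) u : 𝕜)| := le_abs_self _
    _ ≤ ‖(inner 𝕜 (T u) u : 𝕜)‖ := abs_re_le_norm _
    _ ≤ ‖T u‖ * ‖u‖ := norm_inner_le_norm _ _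
    _ ≤ (C * ‖u‖) * ‖u‖ :=
        mul_le_mul_of_nonneg_right
          (le_trans (T.le_opNorm _) (mul_le_mul_of_nonneg_right hC (norm_nonneg _)))
          (norm_nonneg _)
    _ = C * ‖u‖ ^ 2 := by ring

end MoscoAux

set_option maxHeartbeats 1000000 in
/-- For a uniformly bounded net of nonnegative bounded self-adjoint operators `B_α` with
associated forms `b_α[u] = ⟨B_α u, u⟩`, strong operator convergence `B_α → B∞` is equivalent
to Mosco convergence of the forms: (M1) weak lower semicontinuity of `b[u] + ‖u‖²` along
weakly convergent nets, and (M2) existence of strongly convergent recovery nets with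
convergence of form values. -/
theorem stmt_18 {𝕜 H : Type*} [RCLike 𝕜] [NormedAddCommGroup H] [InnerProductSpace 𝕜 H]
    [CompleteSpace H]
    {A : Type*} [Preorder A] [IsDirected A (· ≤ ·)] [Nonempty A]
    (B : A → H →L[𝕜] H) (Blim : H →L[𝕜] H)
    (hsa : ∀ α, IsSelfAdjoint (B α)) (hsalim : IsSelfAdjoint Blim)
    (hpos : ∀ α (u : H), 0 ≤ re (inner 𝕜 (B α u) u : 𝕜))
    (hposlim : ∀ u : H, 0 ≤ re (inner 𝕜 (Blim u) u : 𝕜))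
    (Cb : ℝ) (hb : ∀ α, ‖B α‖ ≤ Cb) :
    (∀ ξ : H, Tendsto (fun α => B α ξ) atTop (nhds (Blim ξ))) ↔
      ((∀ (u : A → H) (ulim : H),
          (∀ v : H, Tendsto (fun α => (inner 𝕜 v (u α) : 𝕜)) atTop (nhds (inner 𝕜 v ulim))) →
          ENNReal.ofReal (re (inner 𝕜 (Blim ulim) ulim : 𝕜) + ‖ulim‖ ^ 2) ≤
            Filter.liminf
              (fun α => ENNReal.ofReal (re (inner 𝕜 (B α (u α)) (u α) : 𝕜) + ‖u α‖ ^ 2))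
              atTop) ∧
        (∀ η : H, ∃ u : A → H, Tendsto u atTop (nhds η) ∧
          Tendsto (fun α => re (inner 𝕜 (B α (u α)) (u α) : 𝕜)) atTop
            (nhds (re (inner 𝕜 (Blim η) η : 𝕜))))) := by
  classical
  have hCb0 : (0 : ℝ) ≤ Cb := le_trans (norm_nonneg _) (hb (Classical.arbitrary A))
  constructor
  · -- strong convergence → Mosco
    intro hS
    constructor
    · -- (M1)
      intro u ulim hw
      set L : ℝ := re (inner 𝕜 (Blim ulim) ulim : 𝕜) + ‖ulim‖ ^ 2 with hLdef
      set ε : A → ℝ := fun α => ‖B α ulim - Blim ulim‖ with hεdef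
      have hε0 : Tendsto ε atTop (nhds 0) := by
        have h := tendsto_iff_norm_sub_tendsto_zero.mp (hS ulim)
        simpa only [ContinuousLinearMap.sub_apply] using h
      set g : A → ℝ := fun α =>
        2 * re (inner 𝕜 (Blim ulim) (u α) : 𝕜) - re (inner 𝕜 (B α ulim) ulim : 𝕜)
          - ε α + (1 - ε α) * (2 * re (inner 𝕜 ulim (u α) : 𝕜) - ‖ulim‖ ^ 2) with hgdef
      have hgL : Tendsto g atTop (nhds L) := by
        have h1 : Tendsto (fun α => re (inner 𝕜 (Blim ulim) (u α) : 𝕜)) atTop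
            (nhds (re (inner 𝕜 (Blim ulim) ulim : 𝕜))) :=
          (RCLike.continuous_re.tendsto _).comp (hw (Blim ulim))
        have h2 : Tendsto (fun α => re (inner 𝕜 (B α ulim) ulim : 𝕜)) atTop
            (nhds (re (inner 𝕜 (Blim ulim) ulim : 𝕜))) :=
          (RCLike.continuous_re.tendsto _).comp ((hS ulim).inner tendsto_const_nhds)
        have h3 : Tendsto (fun α => re (inner 𝕜 ulim (u α) : 𝕜)) atTop (nhds (‖ulim‖ ^ 2)) := by
          have h := (RCLike.continuous_re.tendsto _).comp (hw ulim)
          rwa [Function.comp_def, inner_self_eq_norm_sq] at h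
        have hcomb := (((h1.const_mul 2).sub h2).sub hε0).add
          (((tendsto_const_nhds : Tendsto (fun _ : A => (1 : ℝ)) atTop (nhds 1)).sub hε0).mul
            ((h3.const_mul 2).sub
              (tendsto_const_nhds : Tendsto (fun _ : A => ‖ulim‖ ^ 2) atTop _)))
        have : (2 * re (inner 𝕜 (Blim ulim) ulim : 𝕜) - re (inner 𝕜 (Blim ulim) ulim : 𝕜) - 0
            + (1 - 0) * (2 * ‖ulim‖ ^ 2 - ‖ulim‖ ^ 2)) = L := by rw [hLdef]; ring
        rw [this] at hcomb
        exact hcomb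
      have hfg : ∀ᶠ α in atTop,
          g α ≤ re (inner 𝕜 (B α (u α)) (u α) : 𝕜) + ‖u α‖ ^ 2 := by
        have hev : ∀ᶠ α in atTop, ε α < 1 := hε0.eventually_lt_const (by norm_num : (0:ℝ) < 1)
        filter_upwards [hev] with α hα1
        have hεnn : 0 ≤ ε α := norm_nonneg _
        -- quadratic form expansion at u α = ulim + 1 • (u α - ulim)
        have hq := mosco_qf_expand (B α) (hsa α) ulim (u α - ulim) 1
        have hn := mosco_norm_expand (𝕜 := 𝕜) ulim (u α - ulim) 1
        have huu : ulim + ((1 : ℝ) : 𝕜) • (u α - ulim) = u α := by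
          rw [RCLike.ofReal_one, one_smul]; abel
        rw [huu] at hq hn
        have hq' : re (inner 𝕜 (B α (u α)) (u α) : 𝕜)
            = re (inner 𝕜 (B α ulim) ulim : 𝕜)
              + 2 * re (inner 𝕜 (B α ulim) (u α - ulim) : 𝕜)
              + re (inner 𝕜 (B α (u α - ulim)) (u α - ulim) : 𝕜) := by
          rw [hq]; ring
        have hn' : ‖u α‖ ^ 2
            = ‖ulim‖ ^ 2 + 2 * re (inner 𝕜 ulim (u α - ulim) : 𝕜) + ‖u α - ulim‖ ^ 2 := by
          rw [hn]; ring
        have hpos1 : 0 ≤ re (inner 𝕜 (B α (u α - ulim)) (u α - ulim) : 𝕜) := hpos α _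
        have hpos2 : 0 ≤ ‖u α - ulim‖ ^ 2 := sq_nonneg _
        have hsub1 : re (inner 𝕜 (B α ulim) (u α - ulim) : 𝕜)
            = re (inner 𝕜 (B α ulim) (u α) : 𝕜) - re (inner 𝕜 (B α ulim) ulim : 𝕜) := by
          rw [inner_sub_right, map_sub]
        have hsub2 : re (inner 𝕜 ulim (u α - ulim) : 𝕜)
            = re (inner 𝕜 ulim (u α) : 𝕜) - ‖ulim‖ ^ 2 := by
          rw [inner_sub_right, map_sub, inner_self_eq_norm_sq]
        -- error term
        have herr : |re (inner 𝕜 (B α ulim) (u α) : 𝕜) - re (inner 𝕜 (Blim ulim) (u α) : 𝕜)|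
            ≤ ε α * ‖u α‖ := by
          calc |re (inner 𝕜 (B α ulim) (u α) : 𝕜) - re (inner 𝕜 (Blim ulim) (u α) : 𝕜)|
              = |re ((inner 𝕜 ((B α - Blim) ulim) (u α) : 𝕜))| := by
                rw [ContinuousLinearMap.sub_apply, inner_sub_left, map_sub]
            _ ≤ ‖(inner 𝕜 ((B α - Blim) ulim) (u α) : 𝕜)‖ := abs_re_le_norm _
            _ ≤ ‖(B α - Blim) ulim‖ * ‖u α‖ := norm_inner_le_norm _ _
            _ = ε α * ‖u α‖ := by simp only [hεdef, ContinuousLinearMap.sub_apply]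
        have habs := abs_le.mp herr
        have hsq : 2 * ‖u α‖ ≤ 1 + ‖u α‖ ^ 2 := by nlinarith [sq_nonneg (‖u α‖ - 1)]
        have hprod : 0 ≤ (1 - ε α) * ‖u α - ulim‖ ^ 2 :=
          mul_nonneg (by linarith) hpos2
        have hkey : 0 ≤ ε α * (‖u α‖ - 1) ^ 2 := mul_nonneg hεnn (sq_nonneg _)
        simp only [hgdef]
        nlinarith [mul_nonneg hεnn (norm_nonneg (u α)), hq', hn', hsub1, hsub2,
          habs.1, habs.2, hsq, hprod, hkey, hpos1]
      -- conclude via liminf monotonicity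
      have hgof : Tendsto (fun α => ENNReal.ofReal (g α)) atTop (nhds (ENNReal.ofReal L)) :=
        (ENNReal.continuous_ofReal.tendsto _).comp hgL
      have h1 : ENNReal.ofReal L = liminf (fun α => ENNReal.ofReal (g α)) atTop :=
        hgof.liminf_eq.symm
      rw [h1]
      exact liminf_le_liminf (hfg.mono fun α h => ENNReal.ofReal_le_ofReal h)
    · -- (M2): constant recovery net
      intro η
      refine ⟨fun _ => η, tendsto_const_nhds, ?_⟩
      exact (RCLike.continuous_re.tendsto _).comp ((hS η).inner tendsto_const_nhds)
  · -- Mosco → strong convergence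
    rintro ⟨hM1, hM2⟩ ξ
    -- pointwise convergence of the forms
    have hq : ∀ w : H, Tendsto (fun α => re (inner 𝕜 (B α w) w : 𝕜)) atTop
        (nhds (re (inner 𝕜 (Blim w) w : 𝕜))) := by
      intro w
      obtain ⟨u, hu, huq⟩ := hM2 w
      have hdiff : Tendsto
          (fun α => re (inner 𝕜 (B α w) w : 𝕜) - re (inner 𝕜 (B α (u α)) (u α) : 𝕜))
          atTop (nhds 0) := by
        apply squeeze_zero_norm
          (a := fun α => Cb * ((‖w‖ + ‖u α‖) * ‖w - u α‖))
        · intro α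
          simpa only [Real.norm_eq_abs] using mosco_qf_diff (B α) (hb α) (u α) w
        · have h1 : Tendsto (fun α => ‖u α‖) atTop (nhds ‖w‖) := hu.norm
          have h2 : Tendsto (fun α => ‖w - u α‖) atTop (nhds 0) := by
            have h2' := ((tendsto_const_nhds : Tendsto (fun _ : A => w) atTop (nhds w)).sub hu).norm
            simpa using h2'
          have := ((((tendsto_const_nhds : Tendsto (fun _ : A => ‖w‖) atTop _).add h1).mul h2).const_mul Cb)
          simpa using this
      have := hdiff.add huq
      simpa using this
    -- convergence of the real parts of ⟨B_α ξ, v⟩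
    have hre : ∀ v : H, Tendsto (fun α => re (inner 𝕜 (B α ξ) v : 𝕜)) atTop
        (nhds (re (inner 𝕜 (Blim ξ) v : 𝕜))) := by
      intro v
      have hp : ∀ (T : H →L[𝕜] H), IsSelfAdjoint T →
          re (inner 𝕜 (T ξ) v : 𝕜)
            = (re (inner 𝕜 (T (ξ + v)) (ξ + v) : 𝕜) - re (inner 𝕜 (T (ξ - v)) (ξ - v) : 𝕜)) / 4 := by
        intro T hT
        have h1 := mosco_qf_expand T hT ξ v 1
        have h2 := mosco_qf_expand T hT ξ v (-1)
        have e1 : ξ + ((1 : ℝ) : 𝕜) • v = ξ + v := by rw [RCLike.ofReal_one, one_smul]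
        have e2 : ξ + ((-1 : ℝ) : 𝕜) • v = ξ - v := by
          rw [show (((-1 : ℝ) : 𝕜)) = -1 by push_cast; ring, neg_one_smul]; abel
        rw [e1] at h1
        rw [e2] at h2
        rw [h1, h2]; ring
      have h1 := hq (ξ + v)
      have h2 := hq (ξ - v)
      have hcomb := (h1.sub h2).div_const 4
      rw [← hp Blim hsalim] at hcomb
      exact Tendsto.congr (fun α => (hp (B α) (hsa α)).symm) hcomb
    -- full weak convergence of B_α ξ
    have hweak : ∀ v : H, Tendsto (fun α => (inner 𝕜 v (B α ξ) : 𝕜)) atTop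
        (nhds (inner 𝕜 v (Blim ξ))) := by
      intro v
      have hIm : Tendsto (fun α => im (inner 𝕜 (B α ξ) v : 𝕜)) atTop
          (nhds (im (inner 𝕜 (Blim ξ) v : 𝕜))) := by
        have h := hre ((I : 𝕜) • v)
        simp only [inner_smul_right, I_mul_re] at h
        have := h.neg
        simpa using this
      have hz : Tendsto (fun α => (inner 𝕜 (B α ξ) v : 𝕜)) atTop
          (nhds (inner 𝕜 (Blim ξ) v)) := by
        have hR := ((RCLike.continuous_ofReal (K := 𝕜)).tendsto
          (re (inner 𝕜 (Blim ξ) v : 𝕜))).comp (hre v)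
        have hI := (((RCLike.continuous_ofReal (K := 𝕜)).tendsto
          (im (inner 𝕜 (Blim ξ) v : 𝕜))).comp hIm).mul
          (tendsto_const_nhds : Tendsto (fun _ : A => (I : 𝕜)) atTop (nhds (I : 𝕜)))
        have hsum := hR.add hI
        simp only [Function.comp_def] at hsum
        have hfun : ∀ α, ((re (inner 𝕜 (B α ξ) v : 𝕜) : 𝕜) + (im (inner 𝕜 (B α ξ) v : 𝕜) : 𝕜) * I)
            = (inner 𝕜 (B α ξ) v : 𝕜) := fun α => re_add_im _
        rw [re_add_im] at hsum
        exact Tendsto.congr hfun hsum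
      have := (continuous_star.tendsto _).comp hz
      simp only [Function.comp_def] at this
      simpa only [RCLike.star_def, inner_conj_symm] using this
    -- the recovery-net trick: u α = ξ + (-s) • (B α ξ - Blim ξ)
    set s : ℝ := 1 / (Cb + 1) with hsdef
    have hCb1 : (0 : ℝ) < Cb + 1 := by linarith
    have hs0 : 0 < s := by positivity
    have hs1 : s * (Cb + 1) = 1 := by rw [hsdef]; field_simp
    set w : A → H := fun α => B α ξ - Blim ξ with hwdef
    set u : A → H := fun α => ξ + ((-s : ℝ) : 𝕜) • w α with hudef
    have hwk : ∀ v : H, Tendsto (fun α => (inner 𝕜 v (u α) : 𝕜)) atTop (nhds (inner 𝕜 v ξ)) := by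
      intro v
      have hv : Tendsto (fun α => (inner 𝕜 v (w α) : 𝕜)) atTop (nhds 0) := by
        have h1 := hweak v
        have h2 := h1.sub (tendsto_const_nhds : Tendsto (fun _ : A => (inner 𝕜 v (Blim ξ) : 𝕜)) atTop _)
        rw [sub_self] at h2
        have : ∀ α, (inner 𝕜 v (B α ξ) : 𝕜) - inner 𝕜 v (Blim ξ) = inner 𝕜 v (w α) := by
          intro α; rw [hwdef, inner_sub_right]
        exact Tendsto.congr this h2
      have := (tendsto_const_nhds : Tendsto (fun _ : A => (inner 𝕜 v ξ : 𝕜)) atTop _).add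
        (hv.const_mul ((-s : ℝ) : 𝕜))
      rw [show (inner 𝕜 v ξ : 𝕜) + ((-s : ℝ) : 𝕜) * 0 = inner 𝕜 v ξ by ring] at this
      refine Tendsto.congr (fun α => ?_) this
      rw [hudef, inner_add_right, inner_smul_right]
    have key := hM1 u ξ hwk
    -- real-valued components
    set d : A → ℝ := fun α => ‖w α‖ ^ 2 with hddef
    set aa : A → ℝ := fun α => re (inner 𝕜 (Blim ξ) (w α) : 𝕜) with haadef
    set cc : A → ℝ := fun α => re (inner 𝕜 ξ (w α) : 𝕜) with hccdef
    have haa0 : Tendsto aa atTop (nhds 0) := by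
      have h1 := (RCLike.continuous_re.tendsto _).comp ((hweak (Blim ξ)).sub
        (tendsto_const_nhds : Tendsto (fun _ : A => (inner 𝕜 (Blim ξ) (Blim ξ) : 𝕜)) atTop _))
      rw [sub_self, map_zero] at h1
      refine Tendsto.congr (fun α => ?_) h1
      simp only [Function.comp_apply, haadef, hwdef, inner_sub_right, map_sub]
    have hcc0 : Tendsto cc atTop (nhds 0) := by
      have h1 := (RCLike.continuous_re.tendsto _).comp ((hweak ξ).sub
        (tendsto_const_nhds : Tendsto (fun _ : A => (inner 𝕜 ξ (Blim ξ) : 𝕜)) atTop _))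
      rw [sub_self, map_zero] at h1
      refine Tendsto.congr (fun α => ?_) h1
      simp only [Function.comp_apply, hccdef, hwdef, inner_sub_right, map_sub]
    set L : ℝ := re (inner 𝕜 (Blim ξ) ξ : 𝕜) + ‖ξ‖ ^ 2 with hLdef
    set h : A → ℝ := fun α =>
      re (inner 𝕜 (B α ξ) ξ : 𝕜) + ‖ξ‖ ^ 2 - 2 * s * aa α - 2 * s * cc α with hhdef
    have hhL : Tendsto h atTop (nhds L) := by
      have := (((hq ξ).add
        (tendsto_const_nhds : Tendsto (fun _ : A => ‖ξ‖ ^ 2) atTop _)).sub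
        ((haa0.const_mul (2 * s)))).sub ((hcc0.const_mul (2 * s)))
      rw [show re (inner 𝕜 (Blim ξ) ξ : 𝕜) + ‖ξ‖ ^ 2 - 2 * s * 0 - 2 * s * 0 = L by
        rw [hLdef]; ring] at this
      refine Tendsto.congr (fun α => ?_) this
      rw [hhdef]
    -- the key pointwise upper bound: f α ≤ h α - s * d α
    have hbound : ∀ α, re (inner 𝕜 (B α (u α)) (u α) : 𝕜) + ‖u α‖ ^ 2 ≤ h α - s * d α := by
      intro α
      have hqe := mosco_qf_expand (B α) (hsa α) ξ (w α) (-s)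
      have hne := mosco_norm_expand (𝕜 := 𝕜) ξ (w α) (-s)
      have hBw : re (inner 𝕜 (B α ξ) (w α) : 𝕜) = ‖w α‖ ^ 2 + re (inner 𝕜 (Blim ξ) (w α) : 𝕜) := by
        have hx : (inner 𝕜 (B α ξ) (w α) : 𝕜) = inner 𝕜 (w α) (w α) + inner 𝕜 (Blim ξ) (w α) := by
          rw [← inner_add_left, show w α + Blim ξ = B α ξ by simp only [hwdef]; abel]
        rw [hx, map_add, inner_self_eq_norm_sq]
      have hqb : re (inner 𝕜 (B α (w α)) (w α) : 𝕜) ≤ Cb * ‖w α‖ ^ 2 :=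
        mosco_qf_bound (B α) (hb α) (w α)
      have hdnn : (0:ℝ) ≤ ‖w α‖ ^ 2 := sq_nonneg _
      have hexp : re (inner 𝕜 (B α (u α)) (u α) : 𝕜) + ‖u α‖ ^ 2
          = re (inner 𝕜 (B α ξ) ξ : 𝕜) + 2 * (-s) * re (inner 𝕜 (B α ξ) (w α) : 𝕜)
              + (-s) ^ 2 * re (inner 𝕜 (B α (w α)) (w α) : 𝕜)
            + (‖ξ‖ ^ 2 + 2 * (-s) * re (inner 𝕜 ξ (w α) : 𝕜) + (-s) ^ 2 * ‖w α‖ ^ 2) := by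
        rw [show u α = ξ + ((-s : ℝ) : 𝕜) • w α from rfl, hqe, hne]
      have hh' : h α = re (inner 𝕜 (B α ξ) ξ : 𝕜) + ‖ξ‖ ^ 2
          - 2 * s * re (inner 𝕜 (Blim ξ) (w α) : 𝕜) - 2 * s * re (inner 𝕜 ξ (w α) : 𝕜) := rfl
      have hd' : d α = ‖w α‖ ^ 2 := rfl
      have h6 : s ^ 2 * re (inner 𝕜 (B α (w α)) (w α) : 𝕜) ≤ s ^ 2 * (Cb * ‖w α‖ ^ 2) :=
        mul_le_mul_of_nonneg_left hqb (sq_nonneg s)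
      have h7 : s ^ 2 * (Cb + 1) * ‖w α‖ ^ 2 = s * ‖w α‖ ^ 2 := by
        have : s ^ 2 * (Cb + 1) = s := by
          rw [sq]
          calc s * s * (Cb + 1) = s * (s * (Cb + 1)) := by ring
            _ = s := by rw [hs1, mul_one]
        rw [this]
      rw [hexp, hBw, hh', hd']
      linarith [h6, h7]
    -- eventual smallness of d
    have hd0 : Tendsto d atTop (nhds 0) := by
      rw [tendsto_order]
      constructor
      · intro b hb'
        exact Eventually.of_forall fun α => lt_of_lt_of_le hb' (sq_nonneg _)
      · intro εd hεd
        set c : ℝ := s * εd / 2 with hcdef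
        have hc0 : 0 < c := by positivity
        have hfge : ∀ᶠ α in atTop,
            L - c < re (inner 𝕜 (B α (u α)) (u α) : 𝕜) + ‖u α‖ ^ 2 := by
          by_cases hLc : L - c < 0
          · refine Eventually.of_forall fun α => lt_of_lt_of_le hLc ?_
            exact add_nonneg (hpos α _) (sq_nonneg _)
          · push_neg at hLc
            have hL0 : 0 < L := lt_of_lt_of_le hc0 (by linarith)
            have hlt : ENNReal.ofReal (L - c) < ENNReal.ofReal L :=
              (ENNReal.ofReal_lt_ofReal_iff hL0).mpr (by linarith)
            have hlt2 : ENNReal.ofReal (L - c) <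
                liminf (fun α => ENNReal.ofReal
                  (re (inner 𝕜 (B α (u α)) (u α) : 𝕜) + ‖u α‖ ^ 2)) atTop :=
              lt_of_lt_of_le hlt (by rw [hLdef]; exact key)
            have hev := eventually_lt_of_lt_liminf hlt2
            filter_upwards [hev] with α hα
            by_contra hcon
            push_neg at hcon
            exact absurd (ENNReal.ofReal_le_ofReal hcon) (not_le_of_gt hα)
        have hhle : ∀ᶠ α in atTop, h α < L + c :=
          hhL.eventually_lt_const (by linarith)
        filter_upwards [hfge, hhle] with α h1 h2
        have h3 := hbound α
        have h4 : s * d α < 2 * c := by linarith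
        have h5 : s * d α < s * εd := by rw [hcdef] at h4; linarith
        exact lt_of_mul_lt_mul_left (by linarith) (le_of_lt hs0)
    -- conclude strong convergence
    have hn0 : Tendsto (fun α => ‖w α‖) atTop (nhds 0) := by
      have hsq := (Real.continuous_sqrt.tendsto _).comp hd0
      simp only [Function.comp_def, Real.sqrt_zero] at hsq
      refine Tendsto.congr (fun α => ?_) hsq
      rw [hddef, Real.sqrt_sq (norm_nonneg _)]
    rw [tendsto_iff_norm_sub_tendsto_zero]
    simpa only [hwdef] using hn0
end
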